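/- Let G be a connected planar directed graph with edge partition E = C ∪ I, let Δ_C (resp. Δ_I) be the dimension of the space of signed loop vectors of cycles entirely in C (resp. I), and let Γ_C (resp. Γ_I) be the dimension of the space of indicator vectors (mod all-ones) of vertex subsets whose edge-cut lies entirely in C (resp. I). Then |F| - 1 - Δ_I - Δ_C = |V| - 1 - Γ_I - Γ_C, i.e., the number of dynamical degrees of freedom computed from faces equals that computed from vertices. -/

import Mathlib

open Matrix Module


/-- `b` is the signed loop vector of a closed walk all of whose edges satisfy
the predicate `good`. -/
def IsHomLoopVec {E V : Type*} [Fintype E] [DecidableEq E]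
    (src tgt : E → V) (good : E → Prop) (b : E → ℝ) : Prop :=
  ∃ (n : ℕ) (vs : Fin (n + 1) → V) (es : Fin n → E) (sgn : Fin n → ℝ),
    vs (Fin.last n) = vs 0 ∧
    (∀ i : Fin n,
      (sgn i = 1 ∧ src (es i) = vs i.castSucc ∧ tgt (es i) = vs i.succ) ∨
      (sgn i = -1 ∧ tgt (es i) = vs i.castSucc ∧ src (es i) = vs i.succ)) ∧
    (∀ i : Fin n, good (es i)) ∧
    b = fun e => ∑ i : Fin n, if es i = e then sgn i else 0

/-- Δ: the dimension of the space spanned by signed loop vectors of cycles all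
of whose edges satisfy `good`. -/
noncomputable def loopDim {E V : Type*} [Fintype E] [DecidableEq E]
    (src tgt : E → V) (good : E → Prop) : ℕ :=
  finrank ℝ (Submodule.span ℝ {b : E → ℝ | IsHomLoopVec src tgt good b})

/-- Γ: the dimension, modulo the all-ones vector, of the space spanned by
indicator vectors of vertex subsets whose induced edge-cut consists only of
edges satisfying `good`. -/
noncomputable def cutDim {E V : Type*} [Fintype V] [DecidableEq V]
    (src tgt : E → V) (good : E → Prop) : ℕ :=
  finrank ℝ (Submodule.span ℝ
    ((Submodule.span ℝ {(fun _ => (1 : ℝ) : V → ℝ)}).mkQ ''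
      {x : V → ℝ | ∃ S : Finset V,
        (∀ e : E, ¬(src e ∈ S ↔ tgt e ∈ S) → good e) ∧
        x = fun v => if v ∈ S then (1 : ℝ) else 0}))


section aux
variable {E V : Type*} [Fintype E] [Fintype V] [DecidableEq E] [DecidableEq V]
variable (src tgt : E → V)
attribute [local instance] Classical.propDecidable

def edgeRel (good : E → Prop) (a b : V) : Prop :=
  ∃ e, good e ∧ ((src e = a ∧ tgt e = b) ∨ (src e = b ∧ tgt e = a))

def gSetoid (good : E → Prop) : Setoid V := Relation.EqvGen.setoid (edgeRel src tgt good)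

noncomputable def compCard (good : E → Prop) : ℕ :=
  Nat.card (Quotient (gSetoid src tgt good))

def incVec (e : E) : V → ℝ := fun v => (if tgt e = v then 1 else 0) - (if src e = v then 1 else 0)

noncomputable def incMap : (E → ℝ) →ₗ[ℝ] (V → ℝ) where
  toFun x := ∑ e, x e • incVec src tgt e
  map_add' x y := by simp [add_smul, Finset.sum_add_distrib]
  map_smul' c x := by simp [smul_smul, Finset.smul_sum]

variable (good : E → Prop)

noncomputable def incMapG : ({e // good e} → ℝ) →ₗ[ℝ] (V → ℝ) where
  toFun x := ∑ e : {e // good e}, x e • incVec src tgt e.1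
  map_add' x y := by simp [add_smul, Finset.sum_add_distrib]
  map_smul' c x := by simp [smul_smul, Finset.smul_sum]

open Classical in
noncomputable def extendMap : ({e // good e} → ℝ) →ₗ[ℝ] (E → ℝ) where
  toFun x := fun e => if h : good e then x ⟨e, h⟩ else 0
  map_add' x y := by funext e; by_cases h : good e <;> simp [h]
  map_smul' c x := by funext e; by_cases h : good e <;> simp [h]

open Classical in
noncomputable def classSum : (V → ℝ) →ₗ[ℝ] (Quotient (gSetoid src tgt good) → ℝ) where
  toFun f := fun q => ∑ v, if Quotient.mk _ v = q then f v else 0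
  map_add' x y := by
    funext q
    rw [Pi.add_apply, ← Finset.sum_add_distrib]
    exact Finset.sum_congr rfl fun v _ => by split <;> simp
  map_smul' c x := by
    funext q
    rw [RingHom.id_apply, Pi.smul_apply, Finset.smul_sum]
    exact Finset.sum_congr rfl fun v _ => by split <;> simp

lemma incMapG_apply (x : {e // good e} → ℝ) :
    incMapG src tgt good x = ∑ e : {e // good e}, x e • incVec src tgt e.1 := rfl

lemma incMap_extendMap (x : {e // good e} → ℝ) :
    incMap src tgt (extendMap good x) = incMapG src tgt good x := by
  classical
  show (∑ e : E, (extendMap good x) e • incVec src tgt e)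
      = ∑ e : {e // good e}, x e • incVec src tgt e.1
  rw [← Finset.sum_subset (Finset.subset_univ (Finset.univ.filter good))
    (fun e _ he => by
      simp only [Finset.mem_filter, Finset.mem_univ, true_and] at he
      show (if h : good e then x ⟨e, h⟩ else 0) • incVec src tgt e = 0
      rw [dif_neg he, zero_smul])]
  rw [Finset.sum_subtype (p := good) (Finset.univ.filter good)
    (fun e => by simp) (fun e => (extendMap good x) e • incVec src tgt e)]
  refine Finset.sum_congr rfl fun e _ => ?_
  show (if h : good e.1 then x ⟨e.1, h⟩ else 0) • incVec src tgt e.1 = _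
  rw [dif_pos e.2, Subtype.eta]

lemma classSum_indicator (w : V) (q : Quotient (gSetoid src tgt good)) :
    (∑ v, if Quotient.mk (gSetoid src tgt good) v = q
      then (if w = v then (1:ℝ) else 0) else 0)
    = if Quotient.mk (gSetoid src tgt good) w = q then 1 else 0 := by
  classical
  rw [Finset.sum_eq_single w]
  · simp
  · intro v _ hv
    split
    · rw [if_neg (fun h => hv h.symm)]
    · rfl
  · intro h; exact absurd (Finset.mem_univ _) h

lemma range_incMapG_eq :
    LinearMap.range (incMapG src tgt good) = LinearMap.ker (classSum src tgt good) := by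
  classical
  apply le_antisymm
  · rintro _ ⟨x, rfl⟩
    rw [LinearMap.mem_ker]
    funext q
    show (∑ v, if Quotient.mk (gSetoid src tgt good) v = q
        then (∑ e : {e // good e}, x e • incVec src tgt e.1) v else 0) = 0
    have h1 : ∀ v, (if Quotient.mk (gSetoid src tgt good) v = q
          then (∑ e : {e // good e}, x e • incVec src tgt e.1) v else 0)
        = ∑ e : {e // good e},
            (if Quotient.mk (gSetoid src tgt good) v = q
              then x e * incVec src tgt e.1 v else 0) := by
      intro v
      split
      · rw [Finset.sum_apply]; rfl
      · simp
    rw [Finset.sum_congr rfl fun v _ => h1 v, Finset.sum_comm]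
    apply Finset.sum_eq_zero
    intro e _
    have h2 : ∀ v, (if Quotient.mk (gSetoid src tgt good) v = q
          then x e * incVec src tgt e.1 v else 0)
        = x e * ((if Quotient.mk (gSetoid src tgt good) v = q
            then (if tgt e.1 = v then (1:ℝ) else 0) else 0)
          - (if Quotient.mk (gSetoid src tgt good) v = q
            then (if src e.1 = v then (1:ℝ) else 0) else 0)) := by
      intro v
      split
      · rw [incVec]
      · simp
    rw [Finset.sum_congr rfl fun v _ => h2 v, ← Finset.mul_sum]
    rw [Finset.sum_sub_distrib, classSum_indicator, classSum_indicator]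
    have h3 : Quotient.mk (gSetoid src tgt good) (src e.1)
        = Quotient.mk (gSetoid src tgt good) (tgt e.1) :=
      Quotient.sound (Relation.EqvGen.rel _ _ ⟨e.1, e.2, Or.inl ⟨rfl, rfl⟩⟩)
    rw [h3, sub_self, mul_zero]
  · intro y hy
    rw [LinearMap.mem_ker] at hy
    have hy' : ∀ q, (∑ v, if Quotient.mk (gSetoid src tgt good) v = q
        then y v else 0) = 0 := by
      intro q
      have := congrFun hy q
      exact this
    have hdiff : ∀ u w : V, (gSetoid src tgt good).r u w →
        (fun v => (if w = v then (1:ℝ) else 0) - (if u = v then 1 else 0))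
          ∈ LinearMap.range (incMapG src tgt good) := by
      intro u w h
      induction h with
      | rel a b hab =>
          obtain ⟨e, he, h1 | h1⟩ := hab
          · refine ⟨Pi.single ⟨e, he⟩ 1, ?_⟩
            have key : (incMapG src tgt good) (Pi.single (⟨e, he⟩ : {e // good e}) 1)
                = incVec src tgt e := by
              rw [incMapG_apply]
              rw [Finset.sum_eq_single (⟨e, he⟩ : {e // good e})]
              · rw [Pi.single_eq_same, one_smul]
              · intro b _ hb; rw [Pi.single_eq_of_ne hb, zero_smul]
              · intro h; exact absurd (Finset.mem_univ _) h
            rw [key]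
            funext v
            simp only [incVec, h1.1, h1.2]
          · refine ⟨-Pi.single ⟨e, he⟩ 1, ?_⟩
            have key : (incMapG src tgt good) (Pi.single (⟨e, he⟩ : {e // good e}) 1)
                = incVec src tgt e := by
              rw [incMapG_apply]
              rw [Finset.sum_eq_single (⟨e, he⟩ : {e // good e})]
              · rw [Pi.single_eq_same, one_smul]
              · intro b _ hb; rw [Pi.single_eq_of_ne hb, zero_smul]
              · intro h; exact absurd (Finset.mem_univ _) h
            rw [map_neg, key]
            funext v
            simp only [Pi.neg_apply, incVec, h1.1, h1.2]
            ring
      | refl a =>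
          exact ⟨0, by rw [map_zero]; funext v; simp⟩
      | symm a b _ ih =>
          obtain ⟨x, hx⟩ := ih
          refine ⟨-x, ?_⟩
          rw [map_neg, hx]
          funext v
          show -((if b = v then (1:ℝ) else 0) - (if a = v then 1 else 0)) = _
          ring
      | trans a b c _ _ ih1 ih2 =>
          obtain ⟨x1, hx1⟩ := ih1
          obtain ⟨x2, hx2⟩ := ih2
          refine ⟨x1 + x2, ?_⟩
          rw [map_add, hx1, hx2]
          funext v
          show ((if b = v then (1:ℝ) else 0) - (if a = v then 1 else 0))
            + ((if c = v then (1:ℝ) else 0) - (if b = v then 1 else 0)) = _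
          ring
    have key : y = ∑ v : V, y v • (fun w' =>
        (if v = w' then (1:ℝ) else 0)
        - (if (Quotient.mk (gSetoid src tgt good) v).out = w' then 1 else 0)) := by
      funext w
      rw [Finset.sum_apply]
      have h4 : ∀ v, (y v • (fun w' =>
          (if v = w' then (1:ℝ) else 0)
          - (if (Quotient.mk (gSetoid src tgt good) v).out = w' then 1 else 0))) w
          = (if v = w then y v else 0)
            - (if (Quotient.mk (gSetoid src tgt good) v).out = w then y v else 0) := by
        intro v
        show y v * (_ - _) = _
        split <;> split <;> ring
      rw [Finset.sum_congr rfl fun v _ => h4 v, Finset.sum_sub_distrib]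
      have h5 : (∑ v, if v = w then y v else 0) = y w := by
        rw [Finset.sum_eq_single w]
        · rw [if_pos rfl]
        · intro v _ hv; rw [if_neg hv]
        · intro h; exact absurd (Finset.mem_univ _) h
      have h6 : (∑ v, if (Quotient.mk (gSetoid src tgt good) v).out = w
          then y v else 0) = 0 := by
        have h7 : ∀ v, (if (Quotient.mk (gSetoid src tgt good) v).out = w
              then y v else 0)
            = (if Quotient.mk (gSetoid src tgt good) v
                = Quotient.mk (gSetoid src tgt good) w
              then (if (Quotient.mk (gSetoid src tgt good) w).out = w
                then y v else 0) else 0) := by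
          intro v
          by_cases h : (Quotient.mk (gSetoid src tgt good) v).out = w
          · have h2 : Quotient.mk (gSetoid src tgt good) v
                = Quotient.mk (gSetoid src tgt good) w := by
              rw [← h]; exact (Quotient.out_eq _).symm
            have h3 : (Quotient.mk (gSetoid src tgt good) w).out = w := by
              rw [← h2, h]
            rw [if_pos h, if_pos h2, if_pos h3]
          · rw [if_neg h]
            split_ifs with h2 h3
            · exact absurd (by rw [h2, h3]) h
            · rfl
            · rfl
        rw [Finset.sum_congr rfl fun v _ => h7 v]
        by_cases hw : (Quotient.mk (gSetoid src tgt good) w).out = w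
        · have h8 : ∀ v, (if Quotient.mk (gSetoid src tgt good) v
                = Quotient.mk (gSetoid src tgt good) w
              then (if (Quotient.mk (gSetoid src tgt good) w).out = w
                then y v else 0) else 0)
              = (if Quotient.mk (gSetoid src tgt good) v
                = Quotient.mk (gSetoid src tgt good) w then y v else 0) := by
            intro v
            split <;> simp [hw]
          rw [Finset.sum_congr rfl fun v _ => h8 v]
          exact hy' _
        · apply Finset.sum_eq_zero
          intro v _
          rw [if_neg hw]
          split <;> rfl
      rw [h5, h6, sub_zero]
    rw [key]
    apply Submodule.sum_mem
    intro v _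
    apply Submodule.smul_mem
    exact hdiff _ _ (Quotient.exact (Quotient.out_eq _))

lemma classSum_surjective : Function.Surjective (classSum src tgt good) := by
  classical
  intro f
  refine ⟨fun v => if (Quotient.mk (gSetoid src tgt good) v).out = v
      then f (Quotient.mk _ v) else 0, ?_⟩
  funext q
  show (∑ v, if Quotient.mk _ v = q then _ else 0) = f q
  rw [Finset.sum_eq_single q.out]
  · rw [if_pos (Quotient.out_eq q)]
    rw [if_pos (by rw [Quotient.out_eq])]
    rw [Quotient.out_eq]
  · intro v _ hv
    by_cases h1 : Quotient.mk (gSetoid src tgt good) v = q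
    · rw [if_pos h1, if_neg]
      intro h2
      rw [← h2, h1] at hv
      exact hv rfl
    · rw [if_neg h1]
  · intro h; exact absurd (Finset.mem_univ _) h

def IsStep (vs : ℕ → V) (es : ℕ → E) (sgn : ℕ → ℝ) (i : ℕ) : Prop :=
  (sgn i = 1 ∧ src (es i) = vs i ∧ tgt (es i) = vs (i+1)) ∨
  (sgn i = -1 ∧ tgt (es i) = vs i ∧ src (es i) = vs (i+1))

lemma step_ends {vs : ℕ → V} {es : ℕ → E} {sgn : ℕ → ℝ} {i : ℕ}
    (h : IsStep src tgt vs es sgn i) :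
    (src (es i) = vs i ∧ tgt (es i) = vs (i+1)) ∨
    (src (es i) = vs (i+1) ∧ tgt (es i) = vs i) := by
  rcases h with ⟨_, h1, h2⟩ | ⟨_, h1, h2⟩
  · exact Or.inl ⟨h1, h2⟩
  · exact Or.inr ⟨h2, h1⟩

lemma step_edge_ne {vs : ℕ → V} {es : ℕ → E} {sgn : ℕ → ℝ} {k : ℕ}
    (hstep : ∀ i < k, IsStep src tgt vs es sgn i)
    (hinj : ∀ i j, i ≤ k → j ≤ k → vs i = vs j → i = j) :
    ∀ i j, i < k → j < k → i ≠ j → es i ≠ es j := by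
  intro i j hi hj hij heq
  have h1 := step_ends src tgt (hstep i hi)
  have h2 := step_ends src tgt (hstep j hj)
  rw [heq] at h1
  rcases h1 with ⟨ha1, ha2⟩ | ⟨ha1, ha2⟩ <;> rcases h2 with ⟨hb1, hb2⟩ | ⟨hb1, hb2⟩
  · have e1 := hinj i j (by omega) (by omega) (ha1.symm.trans hb1)
    omega
  · have e1 := hinj i (j+1) (by omega) (by omega) (ha1.symm.trans hb1)
    have e2 := hinj (i+1) j (by omega) (by omega) (ha2.symm.trans hb2)
    omega
  · have e1 := hinj (i+1) j (by omega) (by omega) (ha1.symm.trans hb1)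
    have e2 := hinj i (j+1) (by omega) (by omega) (ha2.symm.trans hb2)
    omega
  · have e1 := hinj (i+1) (j+1) (by omega) (by omega) (ha1.symm.trans hb1)
    omega

lemma incMap_apply (x : E → ℝ) (v : V) :
    incMap src tgt x v = ∑ e, x e *
      ((if tgt e = v then (1:ℝ) else 0) - (if src e = v then 1 else 0)) := by
  show (∑ e, x e • incVec src tgt e) v = _
  rw [Finset.sum_apply]
  rfl

lemma exists_closed_walk (y : E → ℝ) (hy : incMap src tgt y = 0)
    (e0 : E) (h0 : y e0 ≠ 0) :
    ∃ (m : ℕ) (vs : ℕ → V) (es : ℕ → E) (sgn : ℕ → ℝ), 0 < m ∧ vs m = vs 0 ∧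
      (∀ i < m, IsStep src tgt vs es sgn i) ∧ (∀ i < m, y (es i) ≠ 0) ∧
      (∀ i j, i < m → j < m → es i = es j → i = j) := by
  classical
  have hcons : ∀ u : V, ∑ e, y e *
      ((if tgt e = u then (1:ℝ) else 0) - (if src e = u then 1 else 0)) = 0 := by
    intro u
    rw [← incMap_apply, hy]
    rfl
  set CW : Prop := ∃ (m : ℕ) (vs : ℕ → V) (es : ℕ → E) (sgn : ℕ → ℝ),
      0 < m ∧ vs m = vs 0 ∧
      (∀ i < m, IsStep src tgt vs es sgn i) ∧ (∀ i < m, y (es i) ≠ 0) ∧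
      (∀ i j, i < m → j < m → es i = es j → i = j) with hCW
  have key : ∀ n : ℕ, CW ∨ (∃ (vs : ℕ → V) (es : ℕ → E) (sgn : ℕ → ℝ),
      (∀ i < n+1, IsStep src tgt vs es sgn i) ∧ (∀ i < n+1, y (es i) ≠ 0) ∧
      (∀ i j, i ≤ n+1 → j ≤ n+1 → vs i = vs j → i = j)) := by
    intro n
    induction n with
    | zero =>
        by_cases hsl : src e0 = tgt e0
        · left
          refine ⟨1, fun _ => src e0, fun _ => e0, fun _ => 1, one_pos, rfl, ?_, ?_, ?_⟩
          · intro i _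
            exact Or.inl ⟨rfl, rfl, hsl.symm⟩
          · intro i _; exact h0
          · intro i j hi hj _; omega
        · right
          refine ⟨fun i => if i = 0 then src e0 else tgt e0, fun _ => e0, fun _ => 1,
            ?_, ?_, ?_⟩
          · intro i hi
            have : i = 0 := by omega
            subst this
            exact Or.inl ⟨rfl, rfl, by simp⟩
          · intro i _; exact h0
          · intro i j hi hj hvv
            have hi1 : i = 0 ∨ i = 1 := by omega
            have hj1 : j = 0 ∨ j = 1 := by omega
            rcases hi1 with rfl | rfl <;> rcases hj1 with rfl | rfl
            · rfl
            · exact absurd (by simpa using hvv) hsl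
            · exact absurd (Eq.symm (by simpa using hvv)) hsl
            · rfl
    | succ n ih =>
        rcases ih with cw | ⟨vs, es, sgn, hstep, hne, hinj⟩
        · exact Or.inl cw
        set u := vs (n+1) with hu
        set f := es n with hf
        have hfu : (src f = vs n ∧ tgt f = u) ∨ (tgt f = vs n ∧ src f = u) := by
          rcases hstep n (by omega) with ⟨_, h1, h2⟩ | ⟨_, h1, h2⟩
          · exact Or.inl ⟨h1, h2⟩
          · exact Or.inr ⟨h1, h2⟩
        have hvnu : vs n ≠ u := by
          intro h
          have := hinj n (n+1) (by omega) (by omega) h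
          omega
        have htf : y f * ((if tgt f = u then (1:ℝ) else 0)
            - (if src f = u then 1 else 0)) ≠ 0 := by
          rcases hfu with ⟨h1, h2⟩ | ⟨h1, h2⟩
          · rw [if_pos h2, if_neg (by rw [h1]; exact hvnu)]
            simpa using hne n (by omega)
          · rw [if_neg (by rw [h1]; exact hvnu), if_pos h2]
            simpa using hne n (by omega)
        obtain ⟨e, hef, hterm⟩ : ∃ e, e ≠ f ∧ y e * ((if tgt e = u then (1:ℝ) else 0)
            - (if src e = u then 1 else 0)) ≠ 0 := by
          by_contra hno
          push_neg at hno
          have := hcons u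
          rw [Finset.sum_eq_single f (fun e _ he => hno e he)
            (fun h => absurd (Finset.mem_univ _) h)] at this
          exact htf this
        have hye : y e ≠ 0 := left_ne_zero_of_mul hterm
        have hce := right_ne_zero_of_mul hterm
        obtain ⟨w, σ, hwσ⟩ : ∃ (w : V) (σ : ℝ),
            ((σ = 1 ∧ src e = u ∧ tgt e = w) ∨ (σ = -1 ∧ tgt e = u ∧ src e = w))
            ∧ w ≠ u := by
          by_cases h1 : src e = u <;> by_cases h2 : tgt e = u
          · rw [if_pos h1, if_pos h2, sub_self] at hce
            exact absurd rfl hce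
          · exact ⟨tgt e, 1, Or.inl ⟨rfl, h1, rfl⟩, h2⟩
          · exact ⟨src e, -1, Or.inr ⟨rfl, h2, rfl⟩, h1⟩
          · rw [if_neg h2, if_neg h1, sub_self] at hce
            exact absurd rfl hce
        obtain ⟨hwσ, hwu⟩ := hwσ
        by_cases hold : ∃ j, j ≤ n+1 ∧ vs j = w
        · -- found a closed walk
          left
          obtain ⟨j, hj, hvj⟩ := hold
          have hjn : j ≤ n := by
            rcases Nat.lt_or_ge j (n+1) with h | h
            · omega
            · exfalso; have : j = n+1 := by omega
              subst this; exact hwu (hvj.symm ▸ rfl)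
          set d := (n+1) - j with hd
          have hjd : j + d = n+1 := by omega
          have hd1 : 1 ≤ d := by omega
          refine ⟨d + 1,
            (fun i => if i = d + 1 then vs j else vs (j + i)),
            (fun i => if i = d then e else es (j + i)),
            (fun i => if i = d then σ else sgn (j + i)), by omega, ?_, ?_, ?_, ?_⟩
          · simp [show ¬ (0:ℕ) = d + 1 by omega]
          · intro i hi
            by_cases hid : i = d
            · subst hid
              rcases hwσ with ⟨h1, h2, h3⟩ | ⟨h1, h2, h3⟩
              · exact Or.inl ⟨by simp [h1],
                  by simp [show ¬ d = d + 1 by omega, hjd, h2, hu],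
                  by simp [h3, hvj]⟩
              · exact Or.inr ⟨by simp [h1],
                  by simp [show ¬ d = d + 1 by omega, hjd, h2, hu],
                  by simp [h3, hvj]⟩
            · have h4 : ¬ i = d := hid
              have h5 : ¬ i = d + 1 := by omega
              have h6 : ¬ i + 1 = d + 1 := by omega
              have h7 : j + (i+1) = j + i + 1 := by omega
              rcases hstep (j + i) (by omega) with ⟨h1, h2, h3⟩ | ⟨h1, h2, h3⟩
              · exact Or.inl ⟨by simp [h4, h1], by simp [h4, h5, h2],
                  by simp [h4, h6, h7, h3]⟩
              · exact Or.inr ⟨by simp [h4, h1], by simp [h4, h5, h2],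
                  by simp [h4, h6, h7, h3]⟩
          · intro i hi
            by_cases hid : i = d
            · subst hid; simpa using hye
            · have := hne (j + i) (by omega)
              simpa [hid] using this
          · intro i i' hi hi' heq
            by_contra hii
            by_cases h1 : i = d <;> by_cases h2 : i' = d
            · omega
            · -- e = es (j + i'), i' < d
              subst h1
              simp only [eq_self_iff_true, if_true, if_neg h2] at heq
              have hi'd : i' < d := by omega
              by_cases h3 : j + i' = n
              · exact hef (by rw [heq, h3])
              · have hends := step_ends src tgt (hstep (j + i') (by omega))
                rw [← heq] at hends
                have hu' : src e = u ∨ tgt e = u := by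
                  rcases hwσ with ⟨_, h4, _⟩ | ⟨_, h4, _⟩
                  · exact Or.inl h4
                  · exact Or.inr h4
                have : ∃ t, t ≤ n ∧ vs t = u := by
                  rcases hends with ⟨ha, hb⟩ | ⟨ha, hb⟩ <;> rcases hu' with hc | hc
                  · exact ⟨j + i', by omega, by rw [← ha, hc]⟩
                  · exact ⟨j + i' + 1, by omega, by rw [← hb, hc]⟩
                  · exact ⟨j + i' + 1, by omega, by rw [← ha, hc]⟩
                  · exact ⟨j + i', by omega, by rw [← hb, hc]⟩
                obtain ⟨t, ht, hvt⟩ := this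
                have := hinj t (n+1) (by omega) (by omega) hvt
                omega
            · subst h2
              simp only [eq_self_iff_true, if_true, if_neg h1] at heq
              have hid2 : i < d := by omega
              by_cases h3 : j + i = n
              · exact hef (by rw [← heq, h3])
              · have hends := step_ends src tgt (hstep (j + i) (by omega))
                rw [heq] at hends
                have hu' : src e = u ∨ tgt e = u := by
                  rcases hwσ with ⟨_, h4, _⟩ | ⟨_, h4, _⟩
                  · exact Or.inl h4
                  · exact Or.inr h4
                have hex : ∃ t, t ≤ n ∧ vs t = u := by
                  rcases hends with ⟨ha, hb⟩ | ⟨ha, hb⟩ <;> rcases hu' with hc | hc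
                  · exact ⟨j + i, by omega, by rw [← ha, hc]⟩
                  · exact ⟨j + i + 1, by omega, by rw [← hb, hc]⟩
                  · exact ⟨j + i + 1, by omega, by rw [← ha, hc]⟩
                  · exact ⟨j + i, by omega, by rw [← hb, hc]⟩
                obtain ⟨t, ht, hvt⟩ := hex
                have := hinj t (n+1) (by omega) (by omega) hvt
                omega
            · simp only [if_neg h1, if_neg h2] at heq
              exact step_edge_ne src tgt hstep hinj (j+i) (j+i') (by omega) (by omega)
                (by omega) heq
        · -- extend the path
          right
          push_neg at hold
          refine ⟨(fun i => if i = n+2 then w else vs i),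
            (fun i => if i = n+1 then e else es i),
            (fun i => if i = n+1 then σ else sgn i), ?_, ?_, ?_⟩
          · intro i hi
            by_cases h1 : i = n+1
            · subst h1
              rcases hwσ with ⟨ha, hb, hc⟩ | ⟨ha, hb, hc⟩
              · exact Or.inl ⟨by simp [ha],
                  by simp [show ¬ n+1 = n+2 by omega, hb, hu], by simp [hc]⟩
              · exact Or.inr ⟨by simp [ha],
                  by simp [show ¬ n+1 = n+2 by omega, hb, hu], by simp [hc]⟩
            · have h4 : ¬ i = n + 2 := by omega
              have h5 : ¬ i + 1 = n + 2 := by omega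
              rcases hstep i (by omega) with ⟨ha, hb, hc⟩ | ⟨ha, hb, hc⟩
              · exact Or.inl ⟨by simp [h1, ha], by simp [h1, h4, hb],
                  by simp [h1, h5, hc]⟩
              · exact Or.inr ⟨by simp [h1, ha], by simp [h1, h4, hb],
                  by simp [h1, h5, hc]⟩
          · intro i hi
            by_cases h1 : i = n+1
            · subst h1; simpa using hye
            · have := hne i (by omega)
              simpa [h1] using this
          · intro i i' hi hi' hvv
            by_cases h1 : i = n+2 <;> by_cases h2 : i' = n+2
            · omega
            · subst h1
              simp only [eq_self_iff_true, if_true, if_neg h2] at hvv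
              exact absurd hvv.symm (hold i' (by omega))
            · subst h2
              simp only [eq_self_iff_true, if_true, if_neg h1] at hvv
              exact absurd hvv (hold i (by omega))
            · simp only [if_neg h1, if_neg h2] at hvv
              exact hinj i i' (by omega) (by omega) hvv
  rcases key (Fintype.card V) with cw | ⟨vs, es, sgn, hstep, hne, hinj⟩
  · exact cw
  · exfalso
    have hinjf : Function.Injective (fun i : Fin (Fintype.card V + 2) => vs i) := by
      intro i j h
      exact Fin.ext (hinj i j (by omega) (by omega) h)
    have := Fintype.card_le_of_injective _ hinjf
    simp at this

set_option maxHeartbeats 800000 in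
set_option synthInstance.maxHeartbeats 200000 in
lemma cutDim_add_one [Nonempty V] :
    cutDim src tgt good + 1 = compCard src tgt (fun e => ¬ good e) := by
  classical
  set s := gSetoid src tgt (fun e => ¬ good e) with hs
  letI : Fintype (Quotient s) := Fintype.ofFinite _
  set χ : Quotient s → (V → ℝ) := fun q v => if Quotient.mk s v = q then 1 else 0 with hχ
  set W : Submodule ℝ (V → ℝ) := Submodule.span ℝ (Set.range χ) with hW
  set X : Set (V → ℝ) := {x : V → ℝ | ∃ S : Finset V,
        (∀ e : E, ¬(src e ∈ S ↔ tgt e ∈ S) → good e) ∧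
        x = fun v => if v ∈ S then (1 : ℝ) else 0} with hX
  -- closedness of valid S under the relation
  have hclosed : ∀ (S : Finset V), (∀ e : E, ¬(src e ∈ S ↔ tgt e ∈ S) → good e) →
      ∀ u w : V, s.r u w → (u ∈ S ↔ w ∈ S) := by
    intro S hS u w h
    induction h with
    | rel a b hab =>
        obtain ⟨e, he, h1 | h1⟩ := hab
        · by_contra hc
          exact he (hS e (by rw [h1.1, h1.2]; exact hc))
        · by_contra hc
          exact he (hS e (by rw [h1.1, h1.2]; exact fun h => hc h.symm))
    | refl a => rfl
    | symm a b _ ih => exact ih.symm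
    | trans a b c _ _ ih1 ih2 => exact ih1.trans ih2
  have hspanX : Submodule.span ℝ X = W := by
    apply le_antisymm
    · rw [Submodule.span_le]
      rintro x ⟨S, hS, rfl⟩
      have : (fun v => if v ∈ S then (1:ℝ) else 0)
          = ∑ q : Quotient s, (if q.out ∈ S then (1:ℝ) else 0) • χ q := by
        funext v
        rw [Finset.sum_apply]
        rw [Finset.sum_eq_single (Quotient.mk s v)]
        · have hrel : s.r (Quotient.mk s v).out v := Quotient.exact (Quotient.out_eq _)
          have h2 := hclosed S hS _ _ hrel
          simp only [χ, Pi.smul_apply, if_pos rfl, smul_eq_mul, mul_one]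
          simp [h2]
        · intro q _ hq
          simp [χ, Ne.symm hq]
        · simp
      rw [this]
      exact Submodule.sum_mem _ fun q _ =>
        Submodule.smul_mem _ _ (Submodule.subset_span (Set.mem_range_self q))
    · rw [Submodule.span_le]
      rintro x ⟨q, rfl⟩
      apply Submodule.subset_span
      refine ⟨Finset.univ.filter (fun v => Quotient.mk s v = q), ?_, ?_⟩
      · intro e he
        by_contra hg
        have h1 : s.r (src e) (tgt e) := Relation.EqvGen.rel _ _ ⟨e, hg, Or.inl ⟨rfl, rfl⟩⟩
        have h2 : Quotient.mk s (src e) = Quotient.mk s (tgt e) := Quotient.sound h1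
        simp only [Finset.mem_filter, Finset.mem_univ, true_and, h2] at he
        exact he trivial
      · funext v; simp [χ]
  have hindep : LinearIndependent ℝ χ := by
    rw [linearIndependent_iff']
    intro t g hg q hq
    have h3 := congrFun hg q.out
    rw [Finset.sum_apply] at h3
    rw [Finset.sum_eq_single q] at h3
    · simpa [χ, Quotient.out_eq] using h3
    · intro q' _ hq'
      have : Quotient.mk s q.out = q := Quotient.out_eq _
      simp only [χ, Pi.smul_apply, this, smul_eq_mul]
      rw [if_neg (fun h => hq' h.symm), mul_zero]
    · intro h; exact absurd hq h
  have hrankW : finrank ℝ W = Fintype.card (Quotient s) := finrank_span_eq_card hindep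
  have hone : (fun _ => (1:ℝ) : V → ℝ) ∈ W := by
    have : (fun _ => (1:ℝ) : V → ℝ) = ∑ q : Quotient s, χ q := by
      funext v; rw [Finset.sum_apply]; simp [χ]
    rw [this]
    exact Submodule.sum_mem _ fun q _ => Submodule.subset_span (Set.mem_range_self q)
  have honele : Submodule.span ℝ {(fun _ => (1 : ℝ) : V → ℝ)} ≤ W := by
    rw [Submodule.span_le]; simpa using hone
  set mkQ := (Submodule.span ℝ {(fun _ => (1 : ℝ) : V → ℝ)}).mkQ with hmkQ
  set g : W →ₗ[ℝ] _ := mkQ.comp W.subtype with hg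
  have hrange : LinearMap.range g = Submodule.map mkQ W := by
    rw [hg, LinearMap.range_comp, Submodule.range_subtype]
  have hker : LinearMap.ker g = Submodule.comap W.subtype
      (Submodule.span ℝ {(fun _ => (1 : ℝ) : V → ℝ)}) := by
    rw [hg, LinearMap.ker_comp, Submodule.ker_mkQ]
  have hkerrank : finrank ℝ (LinearMap.ker g) = 1 := by
    rw [hker]
    rw [LinearEquiv.finrank_eq (Submodule.comapSubtypeEquivOfLe honele)]
    apply finrank_span_singleton
    intro h
    obtain ⟨v⟩ := (inferInstance : Nonempty V)
    simpa using congrFun h v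
  have hrn := LinearMap.finrank_range_add_finrank_ker g
  rw [hrange, hkerrank, hrankW] at hrn
  have hcd : cutDim src tgt good = finrank ℝ (Submodule.map mkQ W) := by
    unfold cutDim
    rw [Submodule.span_image, ← hX, hspanX]
  rw [hcd, hrn]
  rw [compCard, Nat.card_eq_fintype_card]


lemma card_split (p q : E → Prop) (h : ∀ e, q e ↔ ¬ p e) :
    Fintype.card {e // p e} + Fintype.card {e // q e} = Fintype.card E := by
  have h2 : Fintype.card {e // q e} = Fintype.card {e // ¬ p e} :=
    Fintype.card_congr (Equiv.subtypeEquivRight h)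
  rw [h2, ← Fintype.card_sum]
  exact Fintype.card_congr (Equiv.sumCompl p)

lemma compCard_congr (p q : E → Prop) (h : ∀ e, p e ↔ q e) :
    compCard src tgt p = compCard src tgt q := by
  have : p = q := funext fun e => propext (h e)
  rw [this]

lemma cutDim_add_one' [Nonempty V] (good bad : E → Prop) (h : ∀ e, bad e ↔ ¬ good e) :
    cutDim src tgt good + 1 = compCard src tgt bad := by
  rw [compCard_congr src tgt bad (fun e => ¬ good e) h]
  exact cutDim_add_one src tgt good

lemma loopvec_exists {y : E → ℝ} (hsupp : ∀ e, y e ≠ 0 → good e)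
    {m : ℕ} {vs : ℕ → V} {es : ℕ → E} {sgn : ℕ → ℝ} (hm : 0 < m)
    (hclosed : vs m = vs 0) (hstep : ∀ i < m, IsStep src tgt vs es sgn i)
    (hys : ∀ i < m, y (es i) ≠ 0)
    (hinj : ∀ i j, i < m → j < m → es i = es j → i = j) :
    ∃ b : E → ℝ, IsHomLoopVec src tgt good b ∧ b (es 0) ≠ 0 ∧
      (∀ e, b e ≠ 0 → y e ≠ 0) := by
  classical
  refine ⟨fun e => ∑ i : Fin m, if es i = e then sgn i else 0, ?_, ?_, ?_⟩
  · refine ⟨m, fun i => vs i, fun i => es i, fun i => sgn i, by simp [hclosed], ?_, ?_, rfl⟩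
    · intro i
      rcases hstep i.val i.isLt with ⟨h1, h2, h3⟩ | ⟨h1, h2, h3⟩
      · exact Or.inl ⟨h1, by simpa using h2, by simpa using h3⟩
      · exact Or.inr ⟨h1, by simpa using h2, by simpa using h3⟩
    · intro i
      exact hsupp _ (hys i.val i.isLt)
  · have h0m : (0:ℕ) < m := hm
    show (∑ i : Fin m, if es i.val = es 0 then sgn i.val else 0) ≠ 0
    rw [Finset.sum_eq_single (⟨0, h0m⟩ : Fin m)]
    · rw [if_pos rfl]
      rcases hstep 0 h0m with ⟨h1, _, _⟩ | ⟨h1, _, _⟩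
      · rw [h1]; exact one_ne_zero
      · rw [h1]; exact neg_ne_zero.2 one_ne_zero
    · intro i _ hi
      rw [if_neg]
      intro h
      exact hi (Fin.ext (hinj i.val 0 i.isLt h0m h))
    · intro h; exact absurd (Finset.mem_univ _) h
  · intro e hbe
    obtain ⟨i, _, hi⟩ := Finset.exists_ne_zero_of_sum_ne_zero hbe
    by_cases h : es i.val = e
    · rw [← h]; exact hys i.val i.isLt
    · rw [if_neg h] at hi; exact absurd rfl hi

lemma loop_supp (b : E → ℝ) (hb : IsHomLoopVec src tgt good b) :
    ∀ e, ¬ good e → b e = 0 := by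
  obtain ⟨n, vs, es, sgn, hcl, hstep, hgood, rfl⟩ := hb
  intro e he
  apply Finset.sum_eq_zero
  intro i _
  rw [if_neg]
  intro h
  exact he (h ▸ hgood i)

lemma loop_incMap (b : E → ℝ) (hb : IsHomLoopVec src tgt good b) :
    incMap src tgt b = 0 := by
  classical
  obtain ⟨n, vs, es, sgn, hcl, hstep, hgood, rfl⟩ := hb
  show (∑ e, (∑ i : Fin n, if es i = e then sgn i else 0) • incVec src tgt e) = 0
  have h1 : ∀ e : E, (∑ i : Fin n, if es i = e then sgn i else 0) • incVec src tgt e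
      = ∑ i : Fin n, (if es i = e then sgn i else 0) • incVec src tgt e := by
    intro e; rw [Finset.sum_smul]
  rw [Finset.sum_congr rfl fun e _ => h1 e, Finset.sum_comm]
  set g : ℕ → (V → ℝ) := fun j => fun w =>
    if h : j < n + 1 then (if vs ⟨j, h⟩ = w then 1 else 0) else 0 with hg
  have h2 : ∀ i : Fin n, (∑ e, (if es i = e then sgn i else 0) • incVec src tgt e)
      = g (i.val + 1) - g i.val := by
    intro i
    rw [Finset.sum_eq_single (es i)]
    · rw [if_pos rfl]
      funext w
      have hi1 : i.val + 1 < n + 1 := by omega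
      have hi0 : i.val < n + 1 := i.isLt.trans (by omega)
      have e1 : g (i.val+1) w = if vs i.succ = w then (1:ℝ) else 0 := by
        show (if h : i.val+1 < n+1 then (if vs ⟨i.val+1, h⟩ = w then (1:ℝ) else 0) else 0) = _
        rw [dif_pos hi1]
        have hx : (⟨i.val+1, hi1⟩ : Fin (n+1)) = i.succ := Fin.ext (by simp)
        rw [hx]
      have e0 : g i.val w = if vs i.castSucc = w then (1:ℝ) else 0 := by
        show (if h : i.val < n+1 then (if vs ⟨i.val, h⟩ = w then (1:ℝ) else 0) else 0) = _
        rw [dif_pos hi0]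
        have hx : (⟨i.val, hi0⟩ : Fin (n+1)) = i.castSucc := Fin.ext (by simp)
        rw [hx]
      show sgn i * incVec src tgt (es i) w = _
      rw [Pi.sub_apply, e1, e0]
      simp only [incVec]
      rcases hstep i with ⟨ha, hb, hc⟩ | ⟨ha, hb, hc⟩
      · rw [ha, hb, hc]; ring
      · rw [ha, hb, hc]; ring
    · intro e' _ he'
      rw [if_neg (fun h => he' h.symm), zero_smul]
    · intro h; exact absurd (Finset.mem_univ _) h
  rw [Finset.sum_congr rfl fun i _ => h2 i]
  rw [Fin.sum_univ_eq_sum_range (fun j => g (j+1) - g j) n]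
  rw [Finset.sum_range_sub g n]
  have e1 : g n = g 0 := by
    funext w
    show (if h : n < n+1 then (if vs ⟨n, h⟩ = w then (1:ℝ) else 0) else 0)
        = (if h : (0:ℕ) < n+1 then (if vs ⟨0, h⟩ = w then (1:ℝ) else 0) else 0)
    rw [dif_pos (Nat.lt_succ_self n), dif_pos (Nat.succ_pos n)]
    have hn : (⟨n, Nat.lt_succ_self n⟩ : Fin (n+1)) = Fin.last n := Fin.ext (by simp)
    have h0 : (⟨0, Nat.succ_pos n⟩ : Fin (n+1)) = 0 := Fin.ext (by simp)
    rw [hn, h0, hcl]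
  rw [e1, sub_self]

lemma mem_span_loops : ∀ (n : ℕ) (y : E → ℝ),
    (Finset.univ.filter (fun e => y e ≠ 0)).card ≤ n →
    (∀ e, ¬ good e → y e = 0) → incMap src tgt y = 0 →
    y ∈ Submodule.span ℝ {b : E → ℝ | IsHomLoopVec src tgt good b} := by
  classical
  intro n
  induction n with
  | zero =>
      intro y hcard _ _
      have hz : y = 0 := by
        funext e
        by_contra h
        have hm : e ∈ Finset.univ.filter (fun e => y e ≠ 0) := by
          simp only [Finset.mem_filter, Finset.mem_univ, true_and]
          exact h
        have := Finset.card_pos.2 ⟨e, hm⟩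
        omega
      rw [hz]; exact Submodule.zero_mem _
  | succ n ih =>
      intro y hcard hsupp hker
      by_cases hy0 : y = 0
      · rw [hy0]; exact Submodule.zero_mem _
      obtain ⟨e0, h0⟩ : ∃ e0, y e0 ≠ 0 := by
        by_contra h; push_neg at h; exact hy0 (funext fun e => h e)
      obtain ⟨m, vs, es, sgn, hm, hcl, hstep, hys, hinj⟩ :=
        exists_closed_walk src tgt y hker e0 h0
      have hsupp' : ∀ e, y e ≠ 0 → good e := by
        intro e h
        by_contra hg
        exact h (hsupp e hg)
      obtain ⟨b, hbloop, hb0, hbsupp⟩ :=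
        loopvec_exists src tgt good hsupp' hm hcl hstep hys hinj
      have hbmem : b ∈ Submodule.span ℝ {b : E → ℝ | IsHomLoopVec src tgt good b} :=
        Submodule.subset_span hbloop
      have hkb := loop_incMap src tgt good b hbloop
      have hsb := loop_supp src tgt good b hbloop
      set c := y (es 0) / b (es 0) with hc
      have hy'mem : y - c • b ∈ Submodule.span ℝ
          {b : E → ℝ | IsHomLoopVec src tgt good b} := by
        apply ih
        · have hsub : Finset.univ.filter (fun e => (y - c • b) e ≠ 0)
              ⊆ (Finset.univ.filter (fun e => y e ≠ 0)).erase (es 0) := by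
            intro e he
            simp only [Finset.mem_filter, Finset.mem_univ, true_and] at he
            rw [Finset.mem_erase]
            constructor
            · intro heq
              apply he
              rw [heq]
              show y (es 0) - c * b (es 0) = 0
              rw [hc, div_mul_cancel₀ _ hb0, sub_self]
            · simp only [Finset.mem_filter, Finset.mem_univ, true_and]
              intro hye
              apply he
              show y e - c * b e = 0
              have hbz : b e = 0 := by
                by_contra hbz
                exact (hbsupp e hbz) hye
              rw [hye, hbz]; ring
          have h1 := Finset.card_le_card hsub
          have h2 : es 0 ∈ Finset.univ.filter (fun e => y e ≠ 0) := by
            simp only [Finset.mem_filter, Finset.mem_univ, true_and]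
            exact hys 0 hm
          rw [Finset.card_erase_of_mem h2] at h1
          omega
        · intro e hg
          show y e - c * b e = 0
          rw [hsupp e hg, hsb e hg]; ring
        · rw [map_sub, hker]
          simp [hkb]
      have hsplit : y = (y - c • b) + c • b := by abel
      rw [hsplit]
      exact Submodule.add_mem _ hy'mem (Submodule.smul_mem _ _ hbmem)

lemma loopDim_add_eq :
    loopDim src tgt good + Fintype.card V
      = Fintype.card {e // good e} + compCard src tgt good := by
  classical
  letI : Fintype (Quotient (gSetoid src tgt good)) := Fintype.ofFinite _
  have hinj : Function.Injective (extendMap (E := E) good) := by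
    intro x y hxy
    funext e
    have h := congrFun hxy e.1
    simpa [extendMap, e.2] using h
  have hspan : Submodule.span ℝ {b : E → ℝ | IsHomLoopVec src tgt good b}
      = Submodule.map (extendMap good) (LinearMap.ker (incMapG src tgt good)) := by
    apply le_antisymm
    · rw [Submodule.span_le]
      intro b hb
      have hsb := loop_supp src tgt good b hb
      have hkb := loop_incMap src tgt good b hb
      have hext : extendMap good (fun e : {e // good e} => b e.1) = b := by
        funext e
        show (if h : good e then b e else 0) = b e
        split
        · rfl
        · exact (hsb e (by assumption)).symm
      refine ⟨fun e => b e.1, ?_, hext⟩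
      show (fun e : {e // good e} => b e.1) ∈ LinearMap.ker (incMapG src tgt good)
      rw [LinearMap.mem_ker, ← incMap_extendMap, hext, hkb]
    · rintro _ ⟨x, hx, rfl⟩
      apply mem_span_loops src tgt good
        (Finset.univ.filter (fun e => extendMap good x e ≠ 0)).card
      · exact le_refl _
      · intro e hg
        show (if h : good e then x ⟨e, h⟩ else 0) = 0
        rw [dif_neg hg]
      · rw [incMap_extendMap]
        exact LinearMap.mem_ker.1 hx
  have h1 : loopDim src tgt good = finrank ℝ (LinearMap.ker (incMapG src tgt good)) := by
    rw [loopDim, hspan]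
    exact (LinearEquiv.finrank_eq
      (Submodule.equivMapOfInjective _ hinj _)).symm
  have h2 := LinearMap.finrank_range_add_finrank_ker (incMapG src tgt good)
  have h3 := LinearMap.finrank_range_add_finrank_ker (classSum src tgt good)
  have h4 : finrank ℝ (LinearMap.range (classSum src tgt good))
      = Fintype.card (Quotient (gSetoid src tgt good)) := by
    rw [LinearMap.range_eq_top.2 (classSum_surjective src tgt good), finrank_top]
    simp [finrank_pi]
  have h5 : finrank ℝ ({e // good e} → ℝ) = Fintype.card {e // good e} := by
    simp [finrank_pi]
  have h6 : finrank ℝ (V → ℝ) = Fintype.card V := by simp [finrank_pi]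
  have h7 : compCard src tgt good = Fintype.card (Quotient (gSetoid src tgt good)) :=
    Nat.card_eq_fintype_card
  rw [range_incMapG_eq] at h2
  omega

lemma combined [Nonempty V] (p q : E → Prop)
    (hpq : ∀ e, p e ↔ ¬ q e) (hqp : ∀ e, q e ↔ ¬ p e) :
    Fintype.card E + 2 + cutDim src tgt p + cutDim src tgt q
      = 2 * Fintype.card V + loopDim src tgt p + loopDim src tgt q := by
  have hcut1 := cutDim_add_one' src tgt p q hqp
  have hcut2 := cutDim_add_one' src tgt q p hpq
  have hloop1 := loopDim_add_eq src tgt p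
  have hloop2 := loopDim_add_eq src tgt q
  have hsplit := card_split p q hqp
  omega

end aux


theorem stmt11 {E V F : Type*} [Fintype E] [Fintype V] [Fintype F]
    [DecidableEq E] [DecidableEq V]
    (src tgt : E → V)
    (hconn : ∀ u v : V, Relation.ReflTransGen
      (fun a b => ∃ e : E, (src e = a ∧ tgt e = b) ∨ (src e = b ∧ tgt e = a)) u v)
    (A : Matrix E V ℝ)
    (hA : ∀ e v, A e v = (if tgt e = v then 1 else 0) - (if src e = v then 1 else 0))
    (B : Matrix F E ℝ)
    (hexact : ∀ x : E → ℝ, B.mulVec x = 0 ↔ ∃ y : V → ℝ, x = A.mulVec y)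
    (hrankA : A.rank = Fintype.card V - 1)
    (hrankB : B.rank = Fintype.card F - 1)
    (hEuler : (Fintype.card V : ℤ) - Fintype.card E + Fintype.card F = 2)
    (C : Finset E) :
    Fintype.card F + cutDim src tgt (· ∉ C) + cutDim src tgt (· ∈ C)
      = Fintype.card V + loopDim src tgt (· ∉ C) + loopDim src tgt (· ∈ C) := by
  classical
  have hVne : Nonempty V := by
    by_contra hV
    haveI : IsEmpty V := not_nonempty_iff.1 hV
    haveI : IsEmpty E := ⟨fun e => IsEmpty.false (src e)⟩
    have hE : Fintype.card E = 0 := Fintype.card_eq_zero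
    have hV0 : Fintype.card V = 0 := Fintype.card_eq_zero
    have hB : B.rank = 0 := Nat.le_zero.1 (by simpa [hE] using B.rank_le_card_width)
    rw [hB] at hrankB
    rw [hV0, hE] at hEuler
    have hF2 : Fintype.card F = 2 := by exact_mod_cast (by linarith : (Fintype.card F : ℤ) = 2)
    omega
  haveI := hVne
  have hmain := combined src tgt (· ∉ C) (· ∈ C)
    (fun e => Iff.rfl) (fun e => not_not.symm)
  omega
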